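/- Let X = ℝ^d with Lebesgue measure and H = L²(X). There is a constant C depending only on d such that for all ε > 0 and all u ∈ H: ‖χ_{4/ε}(q) u‖² ≤ C ε^{-d} ∫_{|a|<ε} ‖e^{i⟨q,a⟩} u − u‖² da, where χ_r is the indicator of {x : |x| > r} and e^{i⟨q,a⟩} is multiplication by x ↦ e^{i⟨x,a⟩}. -/

import Mathlib

open MeasureTheory
open scoped ENNReal NNReal


open Real

lemma sinc_bound (d : ℕ) (hd : 1 ≤ d) {A : ℝ} (hA : 4 / d ≤ A) :
    |Real.sin A| ≤ (1 - 1 / (2 * (d:ℝ) ^ 2)) * A := by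
  have hd1 : (1:ℝ) ≤ d := by exact_mod_cast hd
  have hA0 : 0 < A := lt_of_lt_of_le (by positivity) hA
  have hc : 1 / (2 * (d:ℝ) ^ 2) ≤ 1 / 2 := by
    apply div_le_div_of_nonneg_left (by norm_num) (by norm_num)
    nlinarith
  rcases le_or_gt 3 A with h3 | h3
  · calc |Real.sin A| ≤ 1 := Real.abs_sin_le_one A
    _ ≤ (1 - 1/2) * 3 := by norm_num
    _ ≤ (1 - 1 / (2 * (d:ℝ) ^ 2)) * A := by
        apply mul_le_mul (by linarith) h3 (by norm_num) (by linarith)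
  · have hpi : (3:ℝ) < π := Real.pi_gt_three
    have hApi : A < π := h3.trans hpi
    have hsin : |Real.sin A| = Real.sin A := abs_of_nonneg
      (Real.sin_nonneg_of_nonneg_of_le_pi hA0.le hApi.le)
    have hhalf : Real.sin A = 2 * Real.sin (A/2) * Real.cos (A/2) := by
      rw [← Real.sin_two_mul]; ring_nf
    have hcosnn : 0 ≤ Real.cos (A/2) :=
      Real.cos_nonneg_of_mem_Icc ⟨by linarith, by linarith⟩
    have hsinnn : 0 ≤ Real.sin (A/2) :=
      Real.sin_nonneg_of_nonneg_of_le_pi (by linarith) (by linarith)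
    have hsin2 : Real.sin (A/2) ≤ A/2 := Real.sin_le (by linarith)
    have hcosb : Real.cos (A/2) ≤ 1 - 2 / π ^ 2 * (A/2) ^ 2 :=
      Real.cos_le_one_sub_mul_cos_sq (by rw [abs_of_nonneg (by linarith)]; linarith)
    have hkey : 1 / (2 * (d:ℝ) ^ 2) ≤ 2 / π ^ 2 * (A/2) ^ 2 := by
      have hpi4 : π ≤ 4 := Real.pi_le_four
      have hpisq : π ^ 2 ≤ 16 := by nlinarith [Real.pi_pos]
      have e1 : 16 ≤ A ^ 2 * (d:ℝ) ^ 2 := by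
        have h1 : (4 / (d:ℝ)) ^ 2 ≤ A ^ 2 := pow_le_pow_left₀ (by positivity) hA 2
        have hD : (0:ℝ) < (d:ℝ)^2 := by positivity
        calc (16:ℝ) = (4/(d:ℝ))^2 * (d:ℝ)^2 := by field_simp; norm_num
          _ ≤ A^2 * (d:ℝ)^2 := by nlinarith
      have e2 : (2:ℝ)/π^2*(A/2)^2 = A^2/(2*π^2) := by ring
      rw [e2, div_le_div_iff₀ (by positivity) (by positivity)]
      nlinarith
    have hcb : Real.cos (A/2) ≤ 1 - 1 / (2*(d:ℝ)^2) := by linarith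
    rw [hsin, hhalf]
    calc 2 * Real.sin (A/2) * Real.cos (A/2) ≤ 2 * (A/2) * Real.cos (A/2) := by nlinarith
      _ ≤ 2 * (A/2) * (1 - 1/(2*(d:ℝ)^2)) := by nlinarith
      _ = (1 - 1/(2*(d:ℝ)^2)) * A := by ring

lemma exp_int_val (b δ : ℝ) (hδ : 0 < δ) (hb : b ≠ 0) :
    ∫ t in Set.Ioo (-δ) δ, Complex.exp (Complex.I * b * t) =
      ((2 * Real.sin (b * δ) / b : ℝ) : ℂ) := by
  have h1 : ∫ t in Set.Ioo (-δ) δ, Complex.exp (Complex.I * b * t) =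
      ∫ t in (-δ)..δ, Complex.exp (Complex.I * b * t) := by
    rw [intervalIntegral.integral_of_le (by linarith), ← MeasureTheory.integral_Ioc_eq_integral_Ioo]
  have hc : (Complex.I * b) ≠ 0 := by
    simp [Complex.ext_iff, hb]
  have h2 : ∫ t in (-δ)..δ, Complex.exp (Complex.I * b * t) =
      (Complex.exp (Complex.I * b * δ) - Complex.exp (Complex.I * b * (-δ:ℝ))) / (Complex.I * b) := by
    have := integral_exp_mul_complex (a := -δ) (b := δ) hc
    simpa [mul_assoc] using this
  rw [h1, h2]
  have e1 : Complex.I * b * δ = ((b * δ : ℝ) : ℂ) * Complex.I := by push_cast; ring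
  have e2 : Complex.I * b * ((-δ:ℝ):ℂ) = ((-(b * δ) : ℝ) : ℂ) * Complex.I := by push_cast; ring
  rw [e1, e2, Complex.exp_mul_I, Complex.exp_mul_I]
  have hbz : (b:ℂ) ≠ 0 := by exact_mod_cast hb
  push_cast
  rw [Complex.cos_neg, Complex.sin_neg]
  field_simp
  ring

lemma abs_sin_le_nonneg {x : ℝ} (h : 0 ≤ x) : |Real.sin x| ≤ x := by
  rcases le_or_gt x 1 with h1 | h1
  · rw [abs_of_nonneg (Real.sin_nonneg_of_nonneg_of_le_pi h (by nlinarith [Real.pi_gt_three]))]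
    exact Real.sin_le h
  · exact (Real.abs_sin_le_one x).trans h1.le

lemma abs_sin_le_abs' (x : ℝ) : |Real.sin x| ≤ |x| := by
  rcases le_or_gt 0 x with h | h
  · rw [abs_of_nonneg h]; exact abs_sin_le_nonneg h
  · rw [abs_of_neg h, ← neg_neg x, Real.sin_neg, abs_neg]
    simpa using abs_sin_le_nonneg (by linarith : (0:ℝ) ≤ -x)

lemma exp_int_norm_le (b δ : ℝ) (hδ : 0 < δ) :
    ‖∫ t in Set.Ioo (-δ) δ, Complex.exp (Complex.I * b * t)‖ ≤ 2 * δ := by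
  rcases eq_or_ne b 0 with rfl | hb
  · simp only [Complex.ofReal_zero, mul_zero, zero_mul, Complex.exp_zero]
    have h2 : δ - -δ = 2*δ := by ring
    rw [MeasureTheory.setIntegral_const, Real.volume_real_Ioo, h2,
      max_eq_left (by linarith), norm_smul]
    simp [Real.norm_eq_abs, abs_of_nonneg (by linarith : (0:ℝ) ≤ 2*δ), abs_of_nonneg hδ.le]
  · rw [exp_int_val b δ hδ hb, Complex.norm_real, Real.norm_eq_abs, abs_div]
    rw [div_le_iff₀ (abs_pos.2 hb)]
    calc |2 * Real.sin (b * δ)| = 2 * |Real.sin (b*δ)| := by rw [abs_mul, abs_two]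
      _ ≤ 2 * |b * δ| := by nlinarith [abs_sin_le_abs' (b*δ)]
      _ = 2 * δ * |b| := by rw [abs_mul, abs_of_nonneg hδ.le]; ring

lemma exp_int_norm_le' (d : ℕ) (hd : 1 ≤ d) (b δ : ℝ) (hδ : 0 < δ) (hb : 4 / d ≤ |b| * δ) :
    ‖∫ t in Set.Ioo (-δ) δ, Complex.exp (Complex.I * b * t)‖ ≤
      (1 - 1 / (2 * (d:ℝ) ^ 2)) * (2 * δ) := by
  have hb0 : b ≠ 0 := by
    rintro rfl
    have hd0 : (0:ℝ) < d := by exact_mod_cast hd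
    simp at hb
    nlinarith [div_pos (by norm_num : (0:ℝ) < 4) hd0]
  have habs : |Real.sin (b * δ)| = |Real.sin (|b| * δ)| := by
    rcases abs_cases b with ⟨e, _⟩ | ⟨e, _⟩ <;> rw [e]
    · rw [neg_mul, Real.sin_neg, abs_neg]
  have hs := sinc_bound d hd hb
  rw [exp_int_val b δ hδ hb0, Complex.norm_real, Real.norm_eq_abs, abs_div]
  rw [div_le_iff₀ (abs_pos.2 hb0)]
  calc |2 * Real.sin (b * δ)| = 2 * |Real.sin (|b| * δ)| := by rw [abs_mul, abs_two, habs]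
    _ ≤ 2 * ((1 - 1 / (2 * (d:ℝ)^2)) * (|b| * δ)) := by
        nlinarith [hs]
    _ = (1 - 1/(2*(d:ℝ)^2)) * (2*δ) * |b| := by ring

lemma pi_indicator {d : ℕ} (S : Fin d → Set ℝ) (f : Fin d → ℝ → ℂ) (a : Fin d → ℝ) :
    (Set.univ.pi S).indicator (fun a => ∏ i, f i (a i)) a = ∏ i, (S i).indicator (f i) (a i) := by
  by_cases h : a ∈ Set.univ.pi S
  · rw [Set.indicator_of_mem h]
    exact Finset.prod_congr rfl fun i _ => (Set.indicator_of_mem (h i trivial) _).symm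
  · rw [Set.indicator_of_notMem h]
    obtain ⟨i, hi⟩ : ∃ i, a i ∉ S i := by simpa [Set.mem_pi] using h
    exact (Finset.prod_eq_zero (Finset.mem_univ i) (Set.indicator_of_notMem hi _)).symm

lemma cube_exp_integral (d : ℕ) (δ : ℝ) (x : Fin d → ℝ) :
    ∫ a in Set.univ.pi (fun _ : Fin d => Set.Ioo (-δ) δ),
        Complex.exp (Complex.I * ((∑ i, x i * a i : ℝ) : ℂ)) =
      ∏ i, ∫ t in Set.Ioo (-δ) δ, Complex.exp (Complex.I * (x i) * t) := by
  have hmeas : MeasurableSet (Set.univ.pi (fun _ : Fin d => Set.Ioo (-δ) δ)) :=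
    MeasurableSet.univ_pi fun _ => measurableSet_Ioo
  rw [← MeasureTheory.integral_indicator hmeas]
  have h1 : ∀ a : Fin d → ℝ, Complex.exp (Complex.I * ((∑ i, x i * a i : ℝ) : ℂ)) =
      ∏ i, Complex.exp (Complex.I * (x i) * (a i)) := by
    intro a
    rw [← Complex.exp_sum]
    congr 1
    push_cast
    rw [Finset.mul_sum]
    exact Finset.sum_congr rfl fun i _ => by ring
  simp_rw [h1]
  rw [show ((Set.univ.pi (fun _ : Fin d => Set.Ioo (-δ) δ)).indicator
      (fun a => ∏ i, Complex.exp (Complex.I * (x i) * (a i)))) =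
      fun a => ∏ i, (Set.Ioo (-δ) δ).indicator (fun t => Complex.exp (Complex.I * (x i) * t)) (a i)
    from funext fun a => pi_indicator (fun _ => Set.Ioo (-δ) δ) (fun i t => Complex.exp (Complex.I * (x i) * t)) a]
  beta_reduce
  rw [MeasureTheory.volume_pi]
  rw [MeasureTheory.integral_fintype_prod_eq_prod
    (f := fun i t => (Set.Ioo (-δ) δ).indicator (fun t => Complex.exp (Complex.I * (x i) * t)) t)]
  exact Finset.prod_congr rfl fun i _ => MeasureTheory.integral_indicator measurableSet_Ioo

lemma cube_integral_lb (d : ℕ) (hd : 1 ≤ d) (δ : ℝ) (hδ : 0 < δ) (x : Fin d → ℝ)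
    (j : Fin d) (hj : 4 / d ≤ |x j| * δ) :
    ENNReal.ofReal ((2*δ)^d / (d:ℝ)^2) ≤
      ∫⁻ a in Set.univ.pi (fun _ : Fin d => Set.Ioo (-δ) δ),
        ENNReal.ofReal (2 - 2 * Real.cos (∑ i, x i * a i)) := by
  have hd0 : (0:ℝ) < d := by exact_mod_cast hd
  have hd1 : (1:ℝ) ≤ d := by exact_mod_cast hd
  set S : Set (Fin d → ℝ) := Set.univ.pi (fun _ : Fin d => Set.Ioo (-δ) δ) with hSdef
  have hS : MeasurableSet S := MeasurableSet.univ_pi fun _ => measurableSet_Ioo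
  have hvol : volume S = ENNReal.ofReal ((2*δ)^d) := by
    rw [hSdef, MeasureTheory.volume_pi_pi]
    simp only [Real.volume_Ioo]
    rw [show δ - -δ = 2*δ by ring, Finset.prod_const, Finset.card_univ, Fintype.card_fin,
      ← ENNReal.ofReal_pow (by linarith : (0:ℝ) ≤ 2*δ)]
  have hvne : volume S ≠ ⊤ := by rw [hvol]; exact ENNReal.ofReal_ne_top
  have hvolR : (volume S).toReal = (2*δ)^d := by
    rw [hvol, ENNReal.toReal_ofReal (by positivity)]
  have hθcont : Continuous fun a : Fin d → ℝ => ∑ i, x i * a i := by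
    apply continuous_finset_sum
    exact fun i _ => continuous_const.mul (continuous_apply i)
  have hfcont : Continuous fun a : Fin d → ℝ => 2 - 2 * Real.cos (∑ i, x i * a i) := by
    exact continuous_const.sub (continuous_const.mul (Real.continuous_cos.comp hθcont))
  have hf_int : IntegrableOn (fun a : Fin d → ℝ => 2 - 2 * Real.cos (∑ i, x i * a i)) S := by
    apply Measure.integrableOn_of_bounded hvne hfcont.aestronglyMeasurable (M := 4)
    filter_upwards with a
    rw [Real.norm_eq_abs, abs_le]
    constructor <;> nlinarith [Real.cos_le_one (∑ i, x i * a i),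
      Real.neg_one_le_cos (∑ i, x i * a i)]
  have hf_nn : (0:(Fin d → ℝ) → ℝ) ≤ᵐ[volume.restrict S] fun a : Fin d → ℝ =>
      2 - 2 * Real.cos (∑ i, x i * a i) := by
    filter_upwards with a
    simp only [Pi.zero_apply]
    nlinarith [Real.cos_le_one (∑ i, x i * a i)]
  rw [← MeasureTheory.ofReal_integral_eq_lintegral_ofReal hf_int hf_nn]
  apply ENNReal.ofReal_le_ofReal
  -- now a real-integral estimate
  have hg_int : IntegrableOn (fun a : Fin d → ℝ =>
      Complex.exp (Complex.I * ((∑ i, x i * a i : ℝ) : ℂ))) S := by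
    apply Measure.integrableOn_of_bounded hvne (M := 1)
    · exact (Complex.continuous_exp.comp
        (continuous_const.mul (Complex.continuous_ofReal.comp hθcont))).aestronglyMeasurable
    · filter_upwards with a
      rw [mul_comm]
      rw [Complex.norm_exp_ofReal_mul_I]
  have hcos_int : IntegrableOn (fun a : Fin d → ℝ => Real.cos (∑ i, x i * a i)) S := by
    apply Measure.integrableOn_of_bounded hvne
      (Real.continuous_cos.comp hθcont).aestronglyMeasurable (M := 1)
    filter_upwards with a
    rw [Real.norm_eq_abs]; exact Real.abs_cos_le_one _
  have hsub : ∫ a in S, (2 - 2 * Real.cos (∑ i, x i * a i)) =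
      (∫ _a in S, (2:ℝ)) - ∫ a in S, 2 * Real.cos (∑ i, x i * a i) := by
    apply MeasureTheory.integral_sub
    · exact MeasureTheory.integrableOn_const hvne
    · exact hcos_int.const_mul 2
  have hconst : (∫ _a in S, (2:ℝ)) = (2*δ)^d * 2 := by
    rw [MeasureTheory.setIntegral_const, measureReal_def, hvolR, smul_eq_mul]
  have hre : ∫ a in S, Real.cos (∑ i, x i * a i) =
      (∫ a in S, Complex.exp (Complex.I * ((∑ i, x i * a i : ℝ) : ℂ))).re :=
    calc ∫ a in S, Real.cos (∑ i, x i * a i)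
        = ∫ a in S, Complex.reCLM (Complex.exp (Complex.I * ((∑ i, x i * a i : ℝ) : ℂ))) := by
          refine MeasureTheory.integral_congr_ae (Filter.Eventually.of_forall fun a => ?_)
          simp only [Complex.reCLM_apply]
          rw [mul_comm, Complex.exp_ofReal_mul_I_re]
      _ = Complex.reCLM (∫ a in S, Complex.exp (Complex.I * ((∑ i, x i * a i : ℝ) : ℂ))) :=
          ContinuousLinearMap.integral_comp_comm _ hg_int
      _ = (∫ a in S, Complex.exp (Complex.I * ((∑ i, x i * a i : ℝ) : ℂ))).re := rfl
  have hnorm : ‖∫ a in S, Complex.exp (Complex.I * ((∑ i, x i * a i : ℝ) : ℂ))‖ ≤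
      (1 - 1 / (2 * (d:ℝ)^2)) * (2*δ)^d := by
    rw [hSdef, cube_exp_integral d δ x, norm_prod]
    calc ∏ i, ‖∫ t in Set.Ioo (-δ) δ, Complex.exp (Complex.I * (x i) * t)‖
        = ‖∫ t in Set.Ioo (-δ) δ, Complex.exp (Complex.I * (x j) * t)‖ *
          ∏ i ∈ Finset.univ.erase j, ‖∫ t in Set.Ioo (-δ) δ, Complex.exp (Complex.I * (x i) * t)‖ :=
          (Finset.mul_prod_erase _ _ (Finset.mem_univ j)).symm
      _ ≤ ((1 - 1/(2*(d:ℝ)^2)) * (2*δ)) * (2*δ)^(d-1) := by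
          apply mul_le_mul (exp_int_norm_le' d hd (x j) δ hδ hj)
          · calc ∏ i ∈ Finset.univ.erase j, ‖∫ t in Set.Ioo (-δ) δ, Complex.exp (Complex.I * (x i) * t)‖
                ≤ ∏ _i ∈ Finset.univ.erase j, (2*δ) :=
                  Finset.prod_le_prod (fun i _ => norm_nonneg _)
                    (fun i _ => exp_int_norm_le (x i) δ hδ)
              _ = (2*δ)^(d-1) := by
                  rw [Finset.prod_const, Finset.card_erase_of_mem (Finset.mem_univ j),
                    Finset.card_univ, Fintype.card_fin]
          · exact Finset.prod_nonneg fun i _ => norm_nonneg _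
          · have : 1 / (2*(d:ℝ)^2) ≤ 1/2 := by
              apply div_le_div_of_nonneg_left (by norm_num) (by norm_num); nlinarith
            nlinarith [hδ]
      _ = (1 - 1/(2*(d:ℝ)^2)) * (2*δ)^d := by
          obtain ⟨m, rfl⟩ : ∃ m, d = m + 1 := ⟨d - 1, (Nat.succ_pred_eq_of_pos hd).symm⟩
          rw [Nat.add_sub_cancel, pow_succ]
          ring
  have hRe_le : (∫ a in S, Complex.exp (Complex.I * ((∑ i, x i * a i : ℝ) : ℂ))).re ≤
      (1 - 1 / (2 * (d:ℝ)^2)) * (2*δ)^d :=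
    le_trans (Complex.re_le_norm _) hnorm
  have hmul : ∫ a in S, 2 * Real.cos (∑ i, x i * a i) =
      2 * ∫ a in S, Real.cos (∑ i, x i * a i) := by
    exact MeasureTheory.integral_const_mul 2 _
  rw [hsub, hconst, hmul, hre]
  have hpow : (0:ℝ) < (2*δ)^d := by positivity
  have hd2 : (0:ℝ) < (d:ℝ)^2 := by positivity
  have : (2*δ)^d * 2 - 2 * ((1 - 1/(2*(d:ℝ)^2)) * (2*δ)^d) = (2*δ)^d / (d:ℝ)^2 := by
    field_simp
    ring
  nlinarith [hRe_le]

lemma ball_integral_lb (d : ℕ) (hd : 1 ≤ d) (ε : ℝ) (hε : 0 < ε)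
    (x : EuclideanSpace ℝ (Fin d)) (hx : 4 / ε < ‖x‖) :
    ENNReal.ofReal ((2 / Real.sqrt d)^d * ε^d / (d:ℝ)^2) ≤
      ∫⁻ a in Metric.ball (0 : EuclideanSpace ℝ (Fin d)) ε,
        ENNReal.ofReal (2 - 2 * Real.cos (inner ℝ x a : ℝ)) := by
  have hd0 : (0:ℝ) < d := by exact_mod_cast hd
  set s : ℝ := Real.sqrt d with hs
  have hs0 : 0 < s := Real.sqrt_pos.2 hd0
  have hss : s * s = d := Real.mul_self_sqrt hd0.le
  set δ : ℝ := ε / s with hδdef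
  have hδ : 0 < δ := div_pos hε hs0
  have hδs : δ * s = ε := div_mul_cancel₀ ε hs0.ne'
  -- the equivalence with Pi
  have hmp := EuclideanSpace.volume_preserving_symm_measurableEquiv_toLp (Fin d)
  set e := (MeasurableEquiv.toLp 2 (Fin d → ℝ)).symm with he
  -- cube inside the ball
  set Spi : Set (Fin d → ℝ) := Set.univ.pi (fun _ : Fin d => Set.Ioo (-δ) δ) with hSpi
  have hSmeas : MeasurableSet Spi := MeasurableSet.univ_pi fun _ => measurableSet_Ioo
  have hsub : e ⁻¹' Spi ⊆ Metric.ball (0 : EuclideanSpace ℝ (Fin d)) ε := by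
    intro a ha
    have ha' : ∀ i, a i ∈ Set.Ioo (-δ) δ := fun i => ha i (Set.mem_univ i)
    rw [Metric.mem_ball, dist_zero_right, EuclideanSpace.norm_eq]
    have hsum : ∑ i, ‖a i‖ ^ 2 < ε ^ 2 := by
      have : ∀ i ∈ Finset.univ, ‖a i‖ ^ 2 < δ ^ 2 := by
        intro i _
        have h1 := (ha' i).1
        have h2 := (ha' i).2
        rw [Real.norm_eq_abs, ← sq_abs δ]
        apply pow_lt_pow_left₀ ?_ (abs_nonneg _) (by norm_num)
        · rw [abs_of_pos hδ]; exact abs_lt.2 ⟨h1, h2⟩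
      calc ∑ i, ‖a i‖ ^ 2 < ∑ _i : Fin d, δ ^ 2 :=
            Finset.sum_lt_sum_of_nonempty (Finset.univ_nonempty_iff.2
              (by have : 0 < d := hd; exact Fin.pos_iff_nonempty.1 this)) this
        _ = d * δ ^ 2 := by rw [Finset.sum_const, Finset.card_univ, Fintype.card_fin]; exact nsmul_eq_mul _ _
        _ = ε ^ 2 := by rw [← hδs]; push_cast; nlinarith
    calc Real.sqrt (∑ i, ‖a i‖ ^ 2) < Real.sqrt (ε ^ 2) :=
          Real.sqrt_lt_sqrt (by positivity) hsum
      _ = ε := Real.sqrt_sq hε.le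
  -- pick the coordinate with largest |x i|
  obtain ⟨j, -, hj⟩ := Finset.exists_max_image Finset.univ (fun i => |x i|)
    ⟨⟨0, hd⟩, Finset.mem_univ _⟩
  have hxj : ‖x‖ ≤ s * |x j| := by
    rw [EuclideanSpace.norm_eq]
    have h1 : ∑ i, ‖x i‖ ^ 2 ≤ (d:ℝ) * |x j| ^ 2 := by
      calc ∑ i, ‖x i‖ ^ 2 ≤ ∑ _i : Fin d, |x j| ^ 2 :=
            Finset.sum_le_sum fun i _ => by
              rw [Real.norm_eq_abs]
              exact pow_le_pow_left₀ (abs_nonneg _) (hj i (Finset.mem_univ i)) 2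
        _ = (d:ℝ) * |x j| ^ 2 := by
            rw [Finset.sum_const, Finset.card_univ, Fintype.card_fin, nsmul_eq_mul]
    calc Real.sqrt (∑ i, ‖x i‖ ^ 2) ≤ Real.sqrt ((d:ℝ) * |x j| ^ 2) :=
          Real.sqrt_le_sqrt h1
      _ = s * |x j| := by
          rw [Real.sqrt_mul hd0.le, Real.sqrt_sq_eq_abs, abs_abs]
  have hj4 : 4 / d ≤ |x j| * δ := by
    have h4 : 4 < ‖x‖ * ε := by
      rw [div_lt_iff₀ hε] at hx; linarith
    rw [div_le_iff₀ hd0]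
    have h5 : ‖x‖ * ε ≤ (s * |x j|) * ε := by nlinarith [hε.le]
    calc (4:ℝ) ≤ s * |x j| * ε := by linarith
      _ = |x j| * δ * (s * s) := by rw [← hδs]; ring
      _ = |x j| * δ * d := by rw [hss]
  -- transfer
  have hpow : (2 / s)^d * ε^d / (d:ℝ)^2 = (2*δ)^d / (d:ℝ)^2 := by
    rw [← mul_pow]
    congr 2
    rw [hδdef]; ring
  rw [hpow]
  refine le_trans ?_ (lintegral_mono_set hsub)
  have hfm : Measurable fun b : Fin d → ℝ =>
      ENNReal.ofReal (2 - 2 * Real.cos (∑ i, x i * b i)) := by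
    apply Measurable.ennreal_ofReal
    apply Measurable.const_sub
    apply Measurable.const_mul
    exact (Real.continuous_cos.comp (continuous_finset_sum _
      (fun i _ => continuous_const.mul (continuous_apply i)))).measurable
  have htrans : ∫⁻ a in e ⁻¹' Spi,
      ENNReal.ofReal (2 - 2 * Real.cos (inner ℝ x a : ℝ)) =
      ∫⁻ b in Spi, ENNReal.ofReal (2 - 2 * Real.cos (∑ i, x i * b i)) := by
    rw [← hmp.setLIntegral_comp_preimage hSmeas hfm]
    refine setLIntegral_congr_fun (hmp.measurable hSmeas) (fun a _ => ?_)
    have : (inner ℝ x a : ℝ) = ∑ i, x i * (e a) i := by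
      simp [PiLp.inner_apply, RCLike.inner_apply]
      exact Finset.sum_congr rfl fun i _ => mul_comm _ _
    rw [this]
  rw [htrans]
  exact cube_integral_lb d hd δ hδ x j hj4

lemma integrand_eq (u : EuclideanSpace ℝ (Fin d) → ℂ) (x : EuclideanSpace ℝ (Fin d)) (θ : ℝ) :
    ((‖Complex.exp (Complex.I * (θ:ℂ)) * u x - u x‖₊ : ℝ≥0∞)) ^ 2 =
      ENNReal.ofReal (2 - 2 * Real.cos θ) * (‖u x‖₊ : ℝ≥0∞) ^ 2 := by
  have h1 : Complex.exp (Complex.I * θ) * u x - u x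
      = (Complex.exp (Complex.I * θ) - 1) * u x := by ring
  have h2 : ‖Complex.exp (Complex.I * (θ:ℂ)) - 1‖ ^ 2 = 2 - 2 * Real.cos θ := by
    rw [Complex.sq_norm, Complex.normSq_apply]
    simp only [Complex.sub_re, Complex.sub_im, Complex.one_re, Complex.one_im,
      mul_comm Complex.I ((θ:ℝ):ℂ), Complex.exp_ofReal_mul_I_re, Complex.exp_ofReal_mul_I_im]
    nlinarith [Real.sin_sq_add_cos_sq θ]
  rw [h1, nnnorm_mul, ENNReal.coe_mul, mul_pow]
  congr 1
  rw [← ENNReal.ofReal_coe_nnreal, coe_nnnorm, ← ENNReal.ofReal_pow (norm_nonneg _), h2]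

/-- On `L²(ℝ^d)` there is a constant `C` depending only on `d` such that for
all `ε > 0` and all (measurable) `u`:
`‖χ_{4/ε}(q) u‖² ≤ C ε^{-d} ∫_{|a|<ε} ‖e^{i⟨q,a⟩} u − u‖² da`,
where `χ_r` is the indicator of `{|x| > r}` and `e^{i⟨q,a⟩}` is multiplication by
`x ↦ e^{i⟨x,a⟩}`.  The squared norms are written as (extended) integrals. -/
theorem chi_bound_by_phase_modulation (d : ℕ) :
    ∃ C : ℝ, 0 < C ∧ ∀ (ε : ℝ), 0 < ε →
      ∀ u : EuclideanSpace ℝ (Fin d) → ℂ, Measurable u →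
        (∫⁻ x in {x : EuclideanSpace ℝ (Fin d) | 4 / ε < ‖x‖},
            (‖u x‖₊ : ℝ≥0∞) ^ 2) ≤
          ENNReal.ofReal (C * ε⁻¹ ^ d) *
            ∫⁻ a in Metric.ball (0 : EuclideanSpace ℝ (Fin d)) ε,
              ∫⁻ x : EuclideanSpace ℝ (Fin d),
                (‖Complex.exp (Complex.I * ((inner ℝ x a : ℝ) : ℂ)) * u x - u x‖₊ : ℝ≥0∞) ^ 2 := by
  rcases Nat.eq_zero_or_pos d with rfl | hd
  · refine ⟨1, one_pos, fun ε hε u hu => ?_⟩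
    have hempty : {x : EuclideanSpace ℝ (Fin 0) | 4 / ε < ‖x‖} = ∅ := by
      ext x
      simp only [Set.mem_setOf_eq, Set.mem_empty_iff_false, iff_false, not_lt]
      rw [Subsingleton.elim x 0, norm_zero]
      positivity
    rw [hempty, Measure.restrict_empty, lintegral_zero_measure]
    exact bot_le
  · have hd0 : (0:ℝ) < d := by exact_mod_cast hd
    have hs0 : (0:ℝ) < Real.sqrt d := Real.sqrt_pos.2 hd0
    refine ⟨(d:ℝ)^2 * (Real.sqrt d / 2)^d, by positivity, fun ε hε u hu => ?_⟩
    set C : ℝ := (d:ℝ)^2 * (Real.sqrt d / 2)^d with hC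
    set κ : ℝ := (2 / Real.sqrt d)^d * ε^d / (d:ℝ)^2 with hκ
    have hκ0 : 0 < κ := by positivity
    have hCκ : ENNReal.ofReal (C * ε⁻¹ ^ d) * ENNReal.ofReal κ = 1 := by
      rw [← ENNReal.ofReal_mul (by positivity)]
      rw [show C * ε⁻¹ ^ d * κ = 1 from ?_, ENNReal.ofReal_one]
      have h1 : (Real.sqrt d / 2)^d * (2 / Real.sqrt d)^d = 1 := by
        rw [← mul_pow, show Real.sqrt d / 2 * (2 / Real.sqrt d) = 1 from by
          field_simp, one_pow]
      have h2 : ε⁻¹ ^ d * ε ^ d = 1 := by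
        rw [← mul_pow, inv_mul_cancel₀ hε.ne', one_pow]
      have hd2 : (d:ℝ)^2 ≠ 0 := by positivity
      rw [hC, hκ, show (d:ℝ)^2 * (Real.sqrt d / 2)^d * ε⁻¹ ^ d * ((2 / Real.sqrt d)^d * ε^d / (d:ℝ)^2)
        = ((Real.sqrt d / 2)^d * (2 / Real.sqrt d)^d) * (ε⁻¹ ^ d * ε ^ d) * ((d:ℝ)^2 / (d:ℝ)^2) by ring,
        h1, h2, div_self hd2]
      ring
    set W : Set (EuclideanSpace ℝ (Fin d)) := {x | 4 / ε < ‖x‖} with hW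
    have hWmeas : MeasurableSet W := measurableSet_lt measurable_const measurable_norm
    have hGmeas : Measurable fun x : EuclideanSpace ℝ (Fin d) => (‖u x‖₊ : ℝ≥0∞) ^ 2 :=
      (hu.nnnorm.coe_nnreal_ennreal).pow_const 2
    have hinner : Measurable fun p : EuclideanSpace ℝ (Fin d) × EuclideanSpace ℝ (Fin d) =>
        (inner ℝ p.2 p.1 : ℝ) :=
      (continuous_inner.comp (continuous_snd.prodMk continuous_fst)).measurable
    have hker : Measurable fun p : EuclideanSpace ℝ (Fin d) × EuclideanSpace ℝ (Fin d) =>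
        ENNReal.ofReal (2 - 2 * Real.cos (inner ℝ p.2 p.1 : ℝ)) * (‖u p.2‖₊ : ℝ≥0∞) ^ 2 := by
      refine Measurable.mul (f := fun p : EuclideanSpace ℝ (Fin d) × EuclideanSpace ℝ (Fin d) =>
        ENNReal.ofReal (2 - 2 * Real.cos (inner ℝ p.2 p.1 : ℝ)))
        (g := fun p : EuclideanSpace ℝ (Fin d) × EuclideanSpace ℝ (Fin d) => (‖u p.2‖₊ : ℝ≥0∞) ^ 2) ?_ ?_
      · exact ((measurable_const.sub ((Real.continuous_cos.measurable.comp hinner).const_mul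
          2)).ennreal_ofReal)
      · exact hGmeas.comp measurable_snd
    -- rewrite RHS integrand
    simp only [integrand_eq u]
    have hmain : ENNReal.ofReal κ * ∫⁻ x in W, (‖u x‖₊ : ℝ≥0∞) ^ 2 ≤
        ∫⁻ a in Metric.ball (0 : EuclideanSpace ℝ (Fin d)) ε,
          ∫⁻ x : EuclideanSpace ℝ (Fin d),
            ENNReal.ofReal (2 - 2 * Real.cos (inner ℝ x a : ℝ)) * (‖u x‖₊ : ℝ≥0∞) ^ 2 := by
      calc ENNReal.ofReal κ * ∫⁻ x in W, (‖u x‖₊ : ℝ≥0∞) ^ 2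
          = ∫⁻ x in W, ENNReal.ofReal κ * (‖u x‖₊ : ℝ≥0∞) ^ 2 :=
            (lintegral_const_mul _ hGmeas).symm
        _ ≤ ∫⁻ x in W, (∫⁻ a in Metric.ball (0 : EuclideanSpace ℝ (Fin d)) ε,
              ENNReal.ofReal (2 - 2 * Real.cos (inner ℝ x a : ℝ))) * (‖u x‖₊ : ℝ≥0∞) ^ 2 := by
            apply lintegral_mono_ae
            rw [ae_restrict_iff' hWmeas]
            filter_upwards with x hx
            exact mul_le_mul_left (ball_integral_lb d hd ε hε x hx) _
        _ = ∫⁻ x in W, ∫⁻ a in Metric.ball (0 : EuclideanSpace ℝ (Fin d)) ε,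
              ENNReal.ofReal (2 - 2 * Real.cos (inner ℝ x a : ℝ)) * (‖u x‖₊ : ℝ≥0∞) ^ 2 := by
            refine lintegral_congr fun x => ?_
            have hax : Measurable fun a : EuclideanSpace ℝ (Fin d) =>
                ENNReal.ofReal (2 - 2 * Real.cos (inner ℝ x a : ℝ)) := by
              have hc : Continuous fun a : EuclideanSpace ℝ (Fin d) => (inner ℝ x a : ℝ) :=
                continuous_const.inner continuous_id
              exact (measurable_const.sub ((Real.continuous_cos.comp hc).measurable.const_mul
                2)).ennreal_ofReal
            rw [lintegral_mul_const'' _ hax.aemeasurable]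
        _ = ∫⁻ a in Metric.ball (0 : EuclideanSpace ℝ (Fin d)) ε, ∫⁻ x in W,
              ENNReal.ofReal (2 - 2 * Real.cos (inner ℝ x a : ℝ)) * (‖u x‖₊ : ℝ≥0∞) ^ 2 := by
            apply lintegral_lintegral_swap
            exact (hker.comp (measurable_swap)).aemeasurable
        _ ≤ ∫⁻ a in Metric.ball (0 : EuclideanSpace ℝ (Fin d)) ε,
              ∫⁻ x : EuclideanSpace ℝ (Fin d),
              ENNReal.ofReal (2 - 2 * Real.cos (inner ℝ x a : ℝ)) * (‖u x‖₊ : ℝ≥0∞) ^ 2 :=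
            lintegral_mono fun a => setLIntegral_le_lintegral _ _
    calc ∫⁻ x in W, (‖u x‖₊ : ℝ≥0∞) ^ 2
        = ENNReal.ofReal (C * ε⁻¹ ^ d) * (ENNReal.ofReal κ * ∫⁻ x in W, (‖u x‖₊ : ℝ≥0∞) ^ 2) := by
          rw [← mul_assoc, hCκ, one_mul]
      _ ≤ _ := mul_le_mul_right hmain _
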